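/- Let G be a graph with Δ(G) ≥ 6 and L a list assignment with |L(v)| ≥ Δ(G)+3. Suppose u is a degree-3 vertex with one degree-2 neighbor v and two degree-3 neighbors. If G − {v} admits a 2-distance L-coloring, then G admits one: uncolor u, then color v and u in this order. -/
import Mathlib


open SimpleGraph

/-- Maximum average degree: the supremum over all nonempty subgraphs `H` of `2|E(H)|/|V(H)|`. -/
noncomputable def mad {V : Type} [Fintype V] (G : SimpleGraph V) : ℝ :=
  sSup {x : ℝ | ∃ H : G.Subgraph, H.verts.Nonempty ∧
    x = 2 * H.edgeSet.ncard / H.verts.ncard}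

/-- Two distinct vertices are at distance at most 2. -/
def TwoDistAdj {V : Type} (G : SimpleGraph V) (u v : V) : Prop :=
  u ≠ v ∧ (G.Adj u v ∨ ∃ w, G.Adj u w ∧ G.Adj w v)

/-- `φ` is a 2-distance coloring of `G` from the lists `L`: each vertex gets a color from
its list and vertices at distance at most 2 get distinct colors. -/
def IsTwoDistListColoring {V : Type} (G : SimpleGraph V) (L : V → Finset ℕ) (φ : V → ℕ) :
    Prop :=
  (∀ v, φ v ∈ L v) ∧ ∀ u v, TwoDistAdj G u v → φ u ≠ φ v

/-- If `Δ(G) ≥ 6`, lists have size at least `Δ(G) + 3`, and `u` is a 3-vertex with one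
degree-2 neighbor `v` and two degree-3 neighbors, then any 2-distance list coloring of
`G − {v}` extends to one of `G` (recolor `u` after coloring `v`). -/
theorem extend_coloring_100_vertex
    {V : Type} [Fintype V] [DecidableEq V] (G : SimpleGraph V) [DecidableRel G.Adj]
    (hΔ : 6 ≤ G.maxDegree)
    (L : V → Finset ℕ) (hL : ∀ y, G.maxDegree + 3 ≤ (L y).card)
    (u v a b : V) (hdu : G.degree u = 3)
    (huv : G.Adj u v) (hua : G.Adj u a) (hub : G.Adj u b)
    (hva : v ≠ a) (hvb : v ≠ b) (hab : a ≠ b)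
    (hdv : G.degree v = 2) (hda : G.degree a = 3) (hdb : G.degree b = 3)
    (hcol : ∃ φ, IsTwoDistListColoring (G.induce {y | y ≠ v}) (fun y => L y.1) φ) :
    ∃ φ : V → ℕ, IsTwoDistListColoring G L φ := by
  classical
  obtain ⟨φ₀, hφ₀L, hφ₀ne⟩ := hcol
  have huv' : u ≠ v := G.ne_of_adj huv
  have hua' : u ≠ a := G.ne_of_adj hua
  have hub' : u ≠ b := G.ne_of_adj hub
  have hNcard : ∀ x, (G.neighborFinset x).card = G.degree x := fun x => rfl
  -- N u = {v, a, b}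
  have hNueq : G.neighborFinset u = {v, a, b} := by
    refine (Finset.eq_of_subset_of_card_le ?_ ?_).symm
    · intro x hx
      simp only [Finset.mem_insert, Finset.mem_singleton] at hx
      rcases hx with rfl | rfl | rfl
      · exact (G.mem_neighborFinset u x).mpr huv
      · exact (G.mem_neighborFinset u x).mpr hua
      · exact (G.mem_neighborFinset u x).mpr hub
    · rw [hNcard, hdu]
      have : ({v, a, b} : Finset V).card = 3 := by
        rw [Finset.card_insert_of_notMem (by simp [hva, hvb]),
          Finset.card_insert_of_notMem (by simp [hab]), Finset.card_singleton]
      omega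
  have hNumem : ∀ x, x ∈ G.neighborFinset u → x = v ∨ x = a ∨ x = b := by
    intro x hx
    rw [hNueq] at hx
    simpa using hx
  -- the other neighbor w of v
  have huNv : u ∈ G.neighborFinset v := (G.mem_neighborFinset v u).mpr huv.symm
  have h1 : ((G.neighborFinset v).erase u).card = 1 := by
    rw [Finset.card_erase_of_mem huNv, hNcard, hdv]
  obtain ⟨w, hw⟩ := Finset.card_eq_one.mp h1
  have hNvmem : ∀ x, x ∈ G.neighborFinset v → x = u ∨ x = w := by
    intro x hx
    by_cases h : x = u
    · exact Or.inl h
    · right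
      have : x ∈ (G.neighborFinset v).erase u := Finset.mem_erase.mpr ⟨h, hx⟩
      rw [hw] at this
      exact Finset.mem_singleton.mp this
  have hwNv : w ∈ G.neighborFinset v := by
    refine Finset.mem_of_mem_erase (s := G.neighborFinset v) (a := u) ?_
    rw [hw]; exact Finset.mem_singleton_self w
  have hvNw : v ∈ G.neighborFinset w :=
    (G.mem_neighborFinset w v).mpr ((G.mem_neighborFinset v w).mp hwNv).symm
  have huNa : u ∈ G.neighborFinset a := (G.mem_neighborFinset a u).mpr hua.symm
  have huNb : u ∈ G.neighborFinset b := (G.mem_neighborFinset b u).mpr hub.symm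
  have hvNu : v ∈ G.neighborFinset u := (G.mem_neighborFinset u v).mpr huv
  -- the two forbidden-vertex sets
  set Av : Finset V := (G.neighborFinset v).erase u ∪ (G.neighborFinset u).erase v ∪
      (G.neighborFinset w).erase v with hAv
  set Au : Finset V := (G.neighborFinset u).erase u ∪ (G.neighborFinset v).erase u ∪
      (G.neighborFinset a).erase u ∪ (G.neighborFinset b).erase u with hAu
  have hvAv : v ∉ Av := by
    simp only [hAv, Finset.mem_union, Finset.mem_erase, not_or]
    refine ⟨⟨fun h => (G.notMem_neighborFinset_self v) h.2, ?_⟩, ?_⟩ <;> simp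
  have huAu : u ∉ Au := by
    simp only [hAu, Finset.mem_union, Finset.mem_erase, not_or]
    exact ⟨⟨⟨fun h => (G.notMem_neighborFinset_self u) h.2, by simp⟩, by simp⟩, by simp⟩
  have hAvcard : Av.card ≤ G.maxDegree + 2 := by
    have h2 : ((G.neighborFinset u).erase v).card = 2 := by
      rw [Finset.card_erase_of_mem hvNu, hNcard, hdu]
    have h3 : ((G.neighborFinset w).erase v).card ≤ G.maxDegree - 1 := by
      rw [Finset.card_erase_of_mem hvNw, hNcard]
      exact Nat.sub_le_sub_right (G.degree_le_maxDegree w) 1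
    calc Av.card ≤ ((G.neighborFinset v).erase u ∪ (G.neighborFinset u).erase v).card +
          ((G.neighborFinset w).erase v).card := Finset.card_union_le _ _
      _ ≤ ((G.neighborFinset v).erase u).card + ((G.neighborFinset u).erase v).card +
          ((G.neighborFinset w).erase v).card := by
          exact Nat.add_le_add_right (Finset.card_union_le _ _) _
      _ ≤ G.maxDegree + 2 := by rw [h1, h2]; omega
  have hAucard : Au.card ≤ 8 := by
    have h0 : ((G.neighborFinset u).erase u).card ≤ 3 := by
      calc ((G.neighborFinset u).erase u).card ≤ (G.neighborFinset u).card :=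
            Finset.card_erase_le
        _ = 3 := by rw [hNcard, hdu]
    have h2 : ((G.neighborFinset a).erase u).card = 2 := by
      rw [Finset.card_erase_of_mem huNa, hNcard, hda]
    have h3 : ((G.neighborFinset b).erase u).card = 2 := by
      rw [Finset.card_erase_of_mem huNb, hNcard, hdb]
    calc Au.card ≤ ((G.neighborFinset u).erase u ∪ (G.neighborFinset v).erase u ∪
            (G.neighborFinset a).erase u).card + ((G.neighborFinset b).erase u).card :=
          Finset.card_union_le _ _
      _ ≤ ((G.neighborFinset u).erase u ∪ (G.neighborFinset v).erase u).card +
            ((G.neighborFinset a).erase u).card + ((G.neighborFinset b).erase u).card :=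
          Nat.add_le_add_right (Finset.card_union_le _ _) _
      _ ≤ ((G.neighborFinset u).erase u).card + ((G.neighborFinset v).erase u).card +
            ((G.neighborFinset a).erase u).card + ((G.neighborFinset b).erase u).card := by
          exact Nat.add_le_add_right (Nat.add_le_add_right (Finset.card_union_le _ _) _) _
      _ ≤ 8 := by rw [h1, h2, h3]; omega
  -- membership lemmas
  have mem_Au : ∀ x, x ≠ u → TwoDistAdj G u x → x ∈ Au := by
    rintro x hxu ⟨-, hadj | ⟨z, hz1, hz2⟩⟩
    · refine Finset.mem_union_left _ (Finset.mem_union_left _ (Finset.mem_union_left _ ?_))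
      exact Finset.mem_erase.mpr ⟨hxu, (G.mem_neighborFinset u x).mpr hadj⟩
    · have hz : z ∈ G.neighborFinset u := (G.mem_neighborFinset u z).mpr hz1
      rcases hNumem z hz with rfl | rfl | rfl
      · refine Finset.mem_union_left _ (Finset.mem_union_left _ (Finset.mem_union_right _ ?_))
        exact Finset.mem_erase.mpr ⟨hxu, (G.mem_neighborFinset _ x).mpr hz2⟩
      · refine Finset.mem_union_left _ (Finset.mem_union_right _ ?_)
        exact Finset.mem_erase.mpr ⟨hxu, (G.mem_neighborFinset _ x).mpr hz2⟩
      · refine Finset.mem_union_right _ ?_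
        exact Finset.mem_erase.mpr ⟨hxu, (G.mem_neighborFinset _ x).mpr hz2⟩
  have mem_Av : ∀ x, x ≠ u → x ≠ v → TwoDistAdj G v x → x ∈ Av := by
    rintro x hxu hxv ⟨-, hadj | ⟨z, hz1, hz2⟩⟩
    · refine Finset.mem_union_left _ (Finset.mem_union_left _ ?_)
      exact Finset.mem_erase.mpr ⟨hxu, (G.mem_neighborFinset v x).mpr hadj⟩
    · have hz : z ∈ G.neighborFinset v := (G.mem_neighborFinset v z).mpr hz1
      rcases hNvmem z hz with rfl | rfl
      · refine Finset.mem_union_left _ (Finset.mem_union_right _ ?_)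
        exact Finset.mem_erase.mpr ⟨hxv, (G.mem_neighborFinset _ x).mpr hz2⟩
      · refine Finset.mem_union_right _ ?_
        exact Finset.mem_erase.mpr ⟨hxv, (G.mem_neighborFinset _ x).mpr hz2⟩
  -- base coloring extended arbitrarily at v
  set φ₁ : V → ℕ := fun x => if h : x = v then 0 else φ₀ ⟨x, h⟩ with hφ₁
  -- choose color for v
  have hcv : ∃ c, c ∈ L v ∧ c ∉ Av.image φ₁ := by
    have hcard : (Av.image φ₁).card < (L v).card := by
      have := Finset.card_image_le (s := Av) (f := φ₁)
      have := hL v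
      omega
    have : 0 < (L v \ Av.image φ₁).card := by
      have := Finset.le_card_sdiff (Av.image φ₁) (L v)
      omega
    obtain ⟨c, hc⟩ := Finset.card_pos.mp this
    exact ⟨c, (Finset.mem_sdiff.mp hc).1, (Finset.mem_sdiff.mp hc).2⟩
  obtain ⟨cv, hcvL, hcvF⟩ := hcv
  set φ₂ : V → ℕ := fun x => if x = v then cv else φ₁ x with hφ₂
  -- choose color for u
  have hcu : ∃ c, c ∈ L u ∧ c ∉ Au.image φ₂ := by
    have hcard : (Au.image φ₂).card < (L u).card := by
      have := Finset.card_image_le (s := Au) (f := φ₂)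
      have := hL u
      omega
    have : 0 < (L u \ Au.image φ₂).card := by
      have := Finset.le_card_sdiff (Au.image φ₂) (L u)
      omega
    obtain ⟨c, hc⟩ := Finset.card_pos.mp this
    exact ⟨c, (Finset.mem_sdiff.mp hc).1, (Finset.mem_sdiff.mp hc).2⟩
  obtain ⟨cu, hcuL, hcuF⟩ := hcu
  refine ⟨fun x => if x = u then cu else φ₂ x, ?_, ?_⟩
  · intro y
    by_cases hyu : y = u
    · subst hyu; simpa using hcuL
    · by_cases hyv : y = v
      · subst hyv; simp [hyu, hφ₂]; exact hcvL
      · simp only [hyu, hyv, if_neg, hφ₂, hφ₁, dif_neg]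
        exact hφ₀L ⟨y, hyv⟩
  · -- symmetry of TwoDistAdj
    have tsymm : ∀ x y, TwoDistAdj G x y → TwoDistAdj G y x := by
      rintro x y ⟨h1, h2 | ⟨z, hz1, hz2⟩⟩
      · exact ⟨h1.symm, Or.inl h2.symm⟩
      · exact ⟨h1.symm, Or.inr ⟨z, hz2.symm, hz1.symm⟩⟩
    have key_u : ∀ y, y ≠ u → TwoDistAdj G u y → cu ≠ φ₂ y := by
      intro y hy h he
      exact hcuF (he ▸ Finset.mem_image_of_mem φ₂ (mem_Au y hy h))
    have key_v : ∀ y, y ≠ u → y ≠ v → TwoDistAdj G v y → cv ≠ φ₂ y := by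
      intro y hyu hyv h he
      have : φ₂ y = φ₁ y := by simp [hφ₂, hyv]
      rw [this] at he
      exact hcvF (he ▸ Finset.mem_image_of_mem φ₁ (mem_Av y hyu hyv h))
    intro x y h
    have hxy : x ≠ y := h.1
    by_cases hxu : x = u
    · have hyu : y ≠ u := fun he => hxy (hxu.trans he.symm)
      simp only [if_pos hxu, if_neg hyu]
      exact key_u y hyu (hxu ▸ h)
    · by_cases hyu : y = u
      · simp only [if_pos hyu, if_neg hxu]
        exact (key_u x hxu (hyu ▸ tsymm x y h)).symm
      · simp only [if_neg hxu, if_neg hyu]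
        by_cases hxv : x = v
        · have hyv : y ≠ v := fun he => hxy (hxv.trans he.symm)
          rw [hxv, show φ₂ v = cv by simp [hφ₂]]
          exact key_v y hyu hyv (hxv ▸ h)
        · by_cases hyv : y = v
          · rw [hyv, show φ₂ v = cv by simp [hφ₂]]
            exact (key_v x hxu hxv (hyv ▸ tsymm x y h)).symm
          · -- both generic: use the coloring of G - v
            have hx2 : φ₂ x = φ₀ ⟨x, hxv⟩ := by simp [hφ₂, hφ₁, hxv]
            have hy2 : φ₂ y = φ₀ ⟨y, hyv⟩ := by simp [hφ₂, hφ₁, hyv]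
            rw [hx2, hy2]
            refine hφ₀ne ⟨x, hxv⟩ ⟨y, hyv⟩ ⟨?_, ?_⟩
            · exact fun he => hxy (congrArg Subtype.val he)
            · rcases h.2 with hadj | ⟨z, hz1, hz2⟩
              · exact Or.inl hadj
              · by_cases hzv : z = v
                · exfalso
                  have hz1' : G.Adj x v := hzv ▸ hz1
                  have hz2' : G.Adj v y := hzv ▸ hz2
                  have hx : x = w := (hNvmem x ((G.mem_neighborFinset v x).mpr hz1'.symm)).resolve_left hxu
                  have hy : y = w := (hNvmem y ((G.mem_neighborFinset v y).mpr hz2')).resolve_left hyu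
                  exact hxy (hx.trans hy.symm)
                · exact Or.inr ⟨⟨z, hzv⟩, hz1, hz2⟩
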